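/- Strict ellipticity of the Hessian-quotient-type operator: Let 1 ≤ l < k ≤ n−1. There exists a positive constant c > 0 depending only on n, k and l such that for every λ ∈ ℝⁿ with η ∈ Γ_{k+1}, where η_i = Σ_{j=1}^n λ_j − λ_i, the numbers f_i = (1/(k−l)) · (σ_k(η)/σ_l(η))^{1/(k−l) − 1} · Σ_{p≠i} (σ_{k−1}(η|p)·σ_l(η) − σ_k(η)·σ_{l−1}(η|p)) / σ_l(η)² satisfy Σ_{i=1}^n f_i ≥ c. -/

import Mathlib

/-- The `m`-th elementary symmetric function of `x ∈ ℝⁿ`. -/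
noncomputable def esym (n m : ℕ) (x : Fin n → ℝ) : ℝ :=
  ∑ s ∈ Finset.univ.powersetCard m, ∏ i ∈ s, x i

/-- `σ_m(x|p)`: the `m`-th elementary symmetric function of the vector obtained from `x`
by deleting the entry `x p`. -/
noncomputable def esymDel (n m : ℕ) (x : Fin n → ℝ) (p : Fin n) : ℝ :=
  ∑ s ∈ (Finset.univ.erase p).powersetCard m, ∏ i ∈ s, x i

/-- The Gårding cone `Γ_k ⊂ ℝⁿ`. -/
def GardingCone (n k : ℕ) : Set (Fin n → ℝ) :=
  {x | ∀ i : ℕ, 1 ≤ i → i ≤ k → 0 < esym n i x}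

open Finset Polynomial

lemma esym_eq_esymm (n m : ℕ) (x : Fin n → ℝ) :
    esym n m x = (Multiset.map x Finset.univ.val).esymm m := by
  rw [esym, ← Finset.esymm_map_val]

lemma esym_zero (n : ℕ) (x : Fin n → ℝ) : esym n 0 x = 1 := by
  simp [esym]

lemma sum_esymDel (n j : ℕ) (hj : j ≤ n) (x : Fin n → ℝ) :
    ∑ p : Fin n, esymDel n j x p = ((n : ℝ) - j) * esym n j x := by
  unfold esymDel esym
  rw [Finset.sum_comm' (t' := Finset.univ.powersetCard j)
    (s' := fun s => Finset.univ.filter (fun p => p ∉ s)) ?_]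
  · rw [Finset.mul_sum]
    refine Finset.sum_congr rfl (fun s hs => ?_)
    rw [Finset.sum_const, nsmul_eq_mul]
    congr 1
    have hcard : s.card = j := (Finset.mem_powersetCard_univ.mp hs)
    have : Finset.univ.filter (fun p => p ∉ s) = sᶜ := by
      ext p; simp [Finset.mem_compl]
    rw [this, Finset.card_compl, hcard, Fintype.card_fin, Nat.cast_sub hj]
  · intro p s
    simp only [Finset.mem_powersetCard, Finset.subset_erase, Finset.mem_univ, true_and,
      Finset.mem_filter, Finset.subset_univ]

lemma sum_prod_erase {N : ℕ} (u : Finset (Fin N)) (hu : u.Nonempty) (x : Fin N → ℝ) :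
    ∑ s ∈ u.powersetCard (u.card - 1), ∏ i ∈ s, x i = ∑ p ∈ u, ∏ i ∈ u.erase p, x i := by
  have hc : 1 ≤ u.card := hu.card_pos
  refine Finset.sum_bij' (fun s hs => (u \ s).min' ?_) (fun p hp => u.erase p) ?_ ?_ ?_ ?_ ?_
  · have hs' := Finset.mem_powersetCard.mp hs
    have : (u \ s).card = 1 := by
      rw [Finset.card_sdiff_of_subset hs'.1, hs'.2]
      omega
    rw [← Finset.card_pos, this]; omega
  · intro s hs
    have hs' := Finset.mem_powersetCard.mp hs
    exact Finset.sdiff_subset (Finset.min'_mem _ _)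
  · intro p hp
    rw [Finset.mem_powersetCard]
    exact ⟨Finset.erase_subset _ _, by rw [Finset.card_erase_of_mem hp]⟩
  · intro s hs
    have hs' := Finset.mem_powersetCard.mp hs
    have h1 : (u \ s).card = 1 := by
      rw [Finset.card_sdiff_of_subset hs'.1, hs'.2]; omega
    obtain ⟨a, ha⟩ := Finset.card_eq_one.mp h1
    simp only [ha, Finset.min'_singleton]
    have : u \ {a} = s := by
      rw [← ha, Finset.sdiff_sdiff_eq_self hs'.1]
    rw [← this, Finset.erase_eq]
  · intro p hp
    have : u \ u.erase p = {p} := by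
      ext q
      simp only [Finset.mem_sdiff, Finset.mem_erase, Finset.mem_singleton]
      constructor
      · rintro ⟨hq, hq2⟩; by_contra h; exact hq2 ⟨h, hq⟩
      · rintro rfl; exact ⟨hp, fun h => h.1 rfl⟩
    simp [this]
  · intro s hs
    have hs' := Finset.mem_powersetCard.mp hs
    have h1 : (u \ s).card = 1 := by
      rw [Finset.card_sdiff_of_subset hs'.1, hs'.2]; omega
    obtain ⟨a, ha⟩ := Finset.card_eq_one.mp h1
    simp only [ha, Finset.min'_singleton]
    have : u \ {a} = s := by
      rw [← ha, Finset.sdiff_sdiff_eq_self hs'.1]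
    rw [← this, ← Finset.erase_eq]

lemma esym_self (N : ℕ) (x : Fin N → ℝ) : esym N N x = ∏ i, x i := by
  rw [esym]
  have h2 : (Finset.univ : Finset (Fin N)).powersetCard N = {Finset.univ} := by
    simpa using Finset.powersetCard_self (Finset.univ : Finset (Fin N))
  rw [h2, Finset.sum_singleton]

lemma newton_top (N : ℕ) (hN : 2 ≤ N) (x : Fin N → ℝ) :
    2 * N * (esym N (N-2) x * esym N N x) ≤ ((N:ℝ) - 1) * esym N (N-1) x ^ 2 := by
  haveI : Nonempty (Fin N) := Fin.pos_iff_nonempty.mp (by omega)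
  set b : Fin N → ℝ := fun p => ∏ i ∈ Finset.univ.erase p, x i with hbdef
  have hb1 : esym N (N-1) x = ∑ p, b p := by
    rw [esym]
    have h1 : N - 1 = (Finset.univ : Finset (Fin N)).card - 1 := by simp
    rw [h1, sum_prod_erase _ Finset.univ_nonempty x]
  have hA : ∑ p, esymDel N (N-2) x p = 2 * esym N (N-2) x := by
    rw [sum_esymDel N (N-2) (by omega) x]
    congr 1
    rw [Nat.cast_sub (by omega)]
    push_cast
    ring
  have hB : ∀ p, esymDel N (N-2) x p
      = ∑ q ∈ Finset.univ.erase p, ∏ i ∈ (Finset.univ.erase p).erase q, x i := by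
    intro p
    rw [esymDel]
    have h1 : N - 2 = (Finset.univ.erase p).card - 1 := by
      rw [Finset.card_erase_of_mem (Finset.mem_univ p)]
      simp
      omega
    rw [h1, sum_prod_erase _ ?_ x]
    rw [← Finset.card_pos, Finset.card_erase_of_mem (Finset.mem_univ p)]
    simp
    omega
  have hbb : ∀ p : Fin N, ∀ q ∈ Finset.univ.erase p,
      (∏ i ∈ (Finset.univ.erase p).erase q, x i) * esym N N x = b p * b q := by
    intro p q hq
    have hqp : q ≠ p := Finset.ne_of_mem_erase hq
    have hpq : p ∈ Finset.univ.erase q := Finset.mem_erase.mpr ⟨hqp.symm, Finset.mem_univ p⟩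
    set c : ℝ := ∏ i ∈ (Finset.univ.erase p).erase q, x i with hc
    have h1 : b p = x q * c := (Finset.mul_prod_erase _ x hq).symm
    have h2 : b q = x p * c := by
      rw [hbdef]
      simp only
      rw [← Finset.mul_prod_erase _ x hpq, Finset.erase_right_comm]
    have h3 : esym N N x = x p * b p := by
      rw [esym_self, ← Finset.mul_prod_erase _ x (Finset.mem_univ p)]
    rw [h3, h1, h2]
    ring
  have key : 2 * esym N (N-2) x * esym N N x = (∑ p, b p)^2 - ∑ p, (b p)^2 := by
    have e1 : 2 * esym N (N-2) x * esym N N x = ∑ p, esymDel N (N-2) x p * esym N N x := by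
      rw [← Finset.sum_mul, hA]
    rw [e1]
    have e2 : ∀ p : Fin N, esymDel N (N-2) x p * esym N N x
        = b p * ((∑ q, b q) - b p) := by
      intro p
      rw [hB p, Finset.sum_mul]
      rw [Finset.sum_congr rfl (hbb p)]
      rw [← Finset.mul_sum, Finset.sum_erase_eq_sub (Finset.mem_univ p)]
    rw [Finset.sum_congr rfl (fun p _ => e2 p)]
    rw [Finset.sum_congr rfl (fun p (_ : p ∈ Finset.univ) => (mul_sub (b p) _ _))]
    rw [Finset.sum_sub_distrib, ← Finset.sum_mul, sq]
    ring_nf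
  have cs : (∑ p, b p)^2 ≤ (N:ℝ) * ∑ p, (b p)^2 := by
    have := sq_sum_le_card_mul_sum_sq (s := (Finset.univ : Finset (Fin N))) (f := b)
    simpa using this
  have hN' : (2:ℝ) ≤ (N:ℝ) := by exact_mod_cast hN
  rw [hb1]
  nlinarith [key, cs]

lemma rolle_step (M : Multiset ℝ) (hM : 1 ≤ Multiset.card M) :
    ∃ M' : Multiset ℝ, Multiset.card M' = Multiset.card M - 1 ∧
      ∀ j, j ≤ Multiset.card M - 1 →
        (Multiset.card M : ℝ) * M'.esymm j = ((Multiset.card M : ℝ) - j) * M.esymm j := by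
  classical
  set N := Multiset.card M with hN
  set P : Polynomial ℝ := (M.map fun a => Polynomial.X - Polynomial.C a).prod with hP
  have hPmonic : P.Monic := by
    apply Polynomial.monic_multiset_prod_of_monic
    intro a _
    exact Polynomial.monic_X_sub_C a
  have hPdeg : P.natDegree = N := by
    rw [hP, Polynomial.natDegree_multiset_prod_X_sub_C_eq_card]
  have hProots : P.roots = M := Polynomial.roots_multiset_prod_X_sub_C M
  set D := Polynomial.derivative P with hD
  have hDcoeff : D.coeff (N - 1) = N := by
    rw [hD, Polynomial.coeff_derivative]
    have h1 : N - 1 + 1 = N := by omega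
    rw [h1]
    have h2 : P.coeff N = 1 := by
      rw [← hPdeg]; exact hPmonic.coeff_natDegree
    rw [h2, one_mul]
    exact_mod_cast congrArg (Nat.cast : ℕ → ℝ) h1
  have hDne : D ≠ 0 := fun h => by
    rw [h, Polynomial.coeff_zero] at hDcoeff
    exact (Nat.cast_ne_zero.mpr (by omega : N ≠ 0)) hDcoeff.symm
  have hDdeg : D.natDegree = N - 1 := by
    apply le_antisymm
    · have := Polynomial.natDegree_derivative_le P
      rw [hPdeg] at this
      exact this
    · apply Polynomial.le_natDegree_of_ne_zero
      rw [hDcoeff]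
      exact Nat.cast_ne_zero.mpr (by omega : N ≠ 0)
  have hDlead : D.leadingCoeff = (N : ℝ) := by
    rw [Polynomial.leadingCoeff, hDdeg, hDcoeff]
  have hDroots : Multiset.card D.roots = N - 1 := by
    apply le_antisymm
    · rw [← hDdeg]
      exact_mod_cast Polynomial.card_roots' D
    · have h := Polynomial.card_roots_le_derivative P
      rw [hProots, ← hD] at h
      omega
  refine ⟨D.roots, hDroots, fun j hj => ?_⟩
  have hcoeff := Polynomial.coeff_eq_esymm_roots_of_card
    (p := D) (by rw [hDroots, hDdeg]) (k := N - 1 - j) (by rw [hDdeg]; omega)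
  have hidx : D.natDegree - (N - 1 - j) = j := by rw [hDdeg]; omega
  rw [hidx, hDlead] at hcoeff
  have hcoeff2 : D.coeff (N - 1 - j) = P.coeff (N - j) * ((N - j : ℕ) : ℝ) := by
    rw [hD, Polynomial.coeff_derivative]
    have h1 : N - 1 - j + 1 = N - j := by omega
    rw [h1]
    congr 1
    exact_mod_cast congrArg (Nat.cast : ℕ → ℝ) h1
  have hPcoeff : P.coeff (N - j) = (-1) ^ j * M.esymm j := by
    have h2 : N - j ≤ Multiset.card M := by omega
    have h4 := Multiset.prod_X_sub_C_coeff M h2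
    rw [← hP] at h4
    have h3 : Multiset.card M - (N - j) = j := by omega
    rw [h3] at h4
    exact h4
  have hcast : ((N - j : ℕ) : ℝ) = (N : ℝ) - j := by
    have hjN : j ≤ N := by omega
    push_cast [hjN]
    ring
  rw [hcoeff, hPcoeff, hcast] at hcoeff2
  have hc : ((-1 : ℝ) ^ j) * ((-1 : ℝ) ^ j) = 1 := by
    rw [← pow_add]
    exact Even.neg_one_pow ⟨j, rfl⟩
  linear_combination ((-1 : ℝ) ^ j) * hcoeff2 +
    (((N : ℝ) - j) * M.esymm j - (N : ℝ) * (D.roots).esymm j) * hc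

lemma exists_fn (N : ℕ) (M : Multiset ℝ) (h : Multiset.card M = N) :
    ∃ x : Fin N → ℝ, M = Multiset.map x Finset.univ.val := by
  obtain ⟨L, rfl⟩ := Quot.exists_rep M
  have hL : L.length = N := h
  subst hL
  refine ⟨L.get, ?_⟩
  have : (Finset.univ.val : Multiset (Fin L.length)) = ↑(List.finRange L.length) := rfl
  rw [this]
  show (L : Multiset ℝ) = Multiset.map L.get ↑(List.finRange L.length)
  rw [Multiset.map_coe, List.map_get_finRange]

lemma newton_esymm : ∀ (d : ℕ) (M : Multiset ℝ) (m : ℕ), 1 ≤ m → Multiset.card M = m + 1 + d →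
    M.esymm (m-1) * M.esymm (m+1) * (((Multiset.card M).choose m : ℝ))^2
      ≤ M.esymm m ^ 2 *
        (((Multiset.card M).choose (m-1) : ℝ) * ((Multiset.card M).choose (m+1) : ℝ)) := by
  intro d
  induction d with
  | zero =>
    intro M m hm hcard
    simp only [Nat.add_zero] at hcard
    obtain ⟨x, hx⟩ := exists_fn (m+1) M hcard
    have hesym : ∀ j, M.esymm j = esym (m+1) j x := by
      intro j
      rw [hx, esym_eq_esymm]
    rw [hcard, hesym, hesym, hesym]
    have htop := newton_top (m+1) (by omega) x
    have h1 : m + 1 - 2 = m - 1 := by omega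
    have h2 : m + 1 - 1 = m := by omega
    rw [h1, h2] at htop
    have hc1 : ((m+1).choose m : ℝ) = (m:ℝ) + 1 := by
      rw [Nat.choose_succ_self_right]
      push_cast
      ring
    have hc2 : ((m+1).choose (m+1) : ℝ) = 1 := by
      rw [Nat.choose_self]
      norm_num
    have hc3 : ((m+1).choose (m-1) : ℝ) = ((m:ℝ)+1) * m / 2 := by
      have h3 : m + 1 - 2 = m - 1 := by omega
      rw [← h3, Nat.choose_symm (by omega)]
      rw [Nat.cast_choose_two]
      push_cast
      ring
    rw [hc1, hc2, hc3]
    have hm1 : (1:ℝ) ≤ (m:ℝ) := by exact_mod_cast hm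
    have htop' := mul_le_mul_of_nonneg_left htop (by positivity : (0:ℝ) ≤ ((m:ℝ)+1)/2)
    push_cast at htop'
    nlinarith [htop']
  | succ d ih =>
    intro M m hm hcard
    set N := Multiset.card M with hNdef
    have hN : N = m + 2 + d := by omega
    obtain ⟨M', hcard', hrel⟩ := rolle_step M (by omega)
    have hcardM' : Multiset.card M' = m + 1 + d := by omega
    have ihM := ih M' m hm hcardM'
    rw [hcardM'] at ihM
    have hNm1 : m + 1 + d = N - 1 := by omega
    rw [hNm1] at ihM
    -- relations
    have R1 := hrel (m-1) (by omega)
    have R2 := hrel m (by omega)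
    have R3 := hrel (m+1) (by omega)
    rw [← hNdef] at R1 R2 R3
    set s1 := M'.esymm (m-1); set s2 := M'.esymm m; set s3 := M'.esymm (m+1)
    set σ1 := M.esymm (m-1); set σ2 := M.esymm m; set σ3 := M.esymm (m+1)
    set p := ((N.choose (m-1) : ℕ) : ℝ); set q := ((N.choose m : ℕ) : ℝ)
    set r := ((N.choose (m+1) : ℕ) : ℝ)
    set p' := (((N-1).choose (m-1) : ℕ) : ℝ); set q' := (((N-1).choose m : ℕ) : ℝ) with hq'def
    set r' := (((N-1).choose (m+1) : ℕ) : ℝ)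
    set A : ℝ := (N:ℝ) - ((m-1 : ℕ) : ℝ) with hA
    set B : ℝ := (N:ℝ) - (m:ℝ) with hB
    set C : ℝ := (N:ℝ) - ((m+1 : ℕ) : ℝ) with hC
    -- choose identities
    have hID : ∀ j, j ≤ N - 1 → ((N:ℝ) - (j:ℝ)) * ((N.choose j : ℕ) : ℝ)
        = (N:ℝ) * (((N-1).choose j : ℕ) : ℝ) := by
      intro j hj
      have h0 := Nat.choose_mul_succ_eq (N-1) j
      rw [show N - 1 + 1 = N by omega] at h0
      have h0' : ((N-1).choose j : ℝ) * (N:ℝ) = (N.choose j : ℝ) * ((N - j : ℕ) : ℝ) := by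
        exact_mod_cast congrArg (Nat.cast : ℕ → ℝ) h0
      rw [Nat.cast_sub (by omega : j ≤ N)] at h0'
      linarith [h0']
    have E1 := hID (m-1) (by omega)
    have E2 := hID m (by omega)
    have E3 := hID (m+1) (by omega)
    rw [← hA] at E1
    rw [← hB] at E2
    rw [← hC] at E3
    -- positivity
    have hq'pos : (0:ℝ) < q' := by
      rw [hq'def]
      exact_mod_cast Nat.choose_pos (by omega : m ≤ N - 1)
    have hApos : (0:ℝ) < A := by
      rw [hA]
      have : ((m - 1 : ℕ) : ℝ) < (N : ℝ) := by exact_mod_cast (by omega : m - 1 < N)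
      linarith
    have hCpos : (0:ℝ) < C := by
      rw [hC]
      have : ((m + 1 : ℕ) : ℝ) < (N : ℝ) := by exact_mod_cast (by omega : m + 1 < N)
      linarith
    -- transform ih
    have ih2 := mul_le_mul_of_nonneg_left ihM (by positivity : (0:ℝ) ≤ (N:ℝ)^2)
    have lhs2 : (N:ℝ)^2 * (s1 * s3 * q'^2) = (A*σ1) * (C*σ3) * q'^2 := by
      calc (N:ℝ)^2 * (s1 * s3 * q'^2) = ((N:ℝ)*s1) * ((N:ℝ)*s3) * q'^2 := by ring
      _ = (A*σ1) * (C*σ3) * q'^2 := by rw [R1, R3]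
    have rhs2 : (N:ℝ)^2 * (s2^2 * (p' * r')) = (B*σ2)^2 * (p' * r') := by
      calc (N:ℝ)^2 * (s2^2 * (p' * r')) = ((N:ℝ)*s2)^2 * (p' * r') := by ring
      _ = (B*σ2)^2 * (p' * r') := by rw [R2]
    rw [lhs2, rhs2] at ih2
    -- key proportionality
    have hNne : ((N:ℝ))^2 ≠ 0 := pow_ne_zero 2 (Nat.cast_ne_zero.mpr (by omega : N ≠ 0))
    have key : q^2*B^2*(p'*r') = (p*r)*(A*C)*q'^2 := by
      apply mul_left_cancel₀ hNne
      calc (N:ℝ)^2 * (q^2*B^2*(p'*r')) = q^2*B^2*((N:ℝ)*p')*((N:ℝ)*r') := by ring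
      _ = q^2*B^2*(A*p)*(C*r) := by rw [← E1, ← E3]
      _ = (p*r)*(A*C)*(B*q)^2 := by ring
      _ = (p*r)*(A*C)*((N:ℝ)*q')^2 := by rw [E2]
      _ = (N:ℝ)^2 * ((p*r)*(A*C)*q'^2) := by ring
    -- conclude
    have hpos : (0:ℝ) < A*C*q'^2 := mul_pos (mul_pos hApos hCpos) (pow_pos hq'pos 2)
    have h9 : (A*C*q'^2) * (σ1*σ3*q^2) ≤ (A*C*q'^2) * (σ2^2*(p*r)) := by
      calc (A*C*q'^2) * (σ1*σ3*q^2) = q^2 * ((A*σ1)*(C*σ3)*q'^2) := by ring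
      _ ≤ q^2 * ((B*σ2)^2*(p'*r')) := by
          apply mul_le_mul_of_nonneg_left ih2 (sq_nonneg q)
      _ = (q^2*B^2*(p'*r')) * σ2^2 := by ring
      _ = ((p*r)*(A*C)*q'^2) * σ2^2 := by rw [key]
      _ = (A*C*q'^2) * (σ2^2*(p*r)) := by ring
    exact le_of_mul_le_mul_left h9 hpos

lemma newton_esym (N m : ℕ) (h1 : 1 ≤ m) (h2 : m + 1 ≤ N) (x : Fin N → ℝ) :
    esym N (m-1) x * esym N (m+1) x * ((N.choose m : ℝ))^2
      ≤ esym N m x ^ 2 * ((N.choose (m-1) : ℝ) * (N.choose (m+1) : ℝ)) := by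
  have hcard : Multiset.card (Multiset.map x Finset.univ.val) = N := by simp
  have h3 := newton_esymm (N - (m+1)) (Multiset.map x Finset.univ.val) m h1
    (by rw [hcard]; omega)
  rw [hcard] at h3
  rw [esym_eq_esymm, esym_eq_esymm, esym_eq_esymm]
  exact h3

lemma newton_E (N m : ℕ) (h1 : 1 ≤ m) (h2 : m + 1 ≤ N) (x : Fin N → ℝ) :
    (esym N (m-1) x / (N.choose (m-1) : ℝ)) * (esym N (m+1) x / (N.choose (m+1) : ℝ))
      ≤ (esym N m x / (N.choose m : ℝ))^2 := by
  have hp1 : (0:ℝ) < (N.choose (m-1) : ℝ) := by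
    exact_mod_cast Nat.choose_pos (by omega : m - 1 ≤ N)
  have hp2 : (0:ℝ) < (N.choose (m+1) : ℝ) := by
    exact_mod_cast Nat.choose_pos (by omega : m + 1 ≤ N)
  have hp3 : (0:ℝ) < (N.choose m : ℝ) := by
    exact_mod_cast Nat.choose_pos (by omega : m ≤ N)
  rw [div_mul_div_comm, div_pow, div_le_div_iff₀ (by positivity) (by positivity)]
  calc esym N (m-1) x * esym N (m+1) x * (N.choose m : ℝ)^2
      ≤ esym N m x ^ 2 * ((N.choose (m-1) : ℝ) * (N.choose (m+1) : ℝ)) :=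
        newton_esym N m h1 h2 x
    _ = esym N m x ^ 2 * ((N.choose (m-1) : ℝ) * (N.choose (m+1) : ℝ)) := rfl

lemma chain_ratio (E : ℕ → ℝ) (k : ℕ) (hk : 1 ≤ k)
    (hpos : ∀ j, j ≤ k → 0 < E j)
    (hnewton : ∀ j, 1 ≤ j → j + 1 ≤ k → E (j-1) * E (j+1) ≤ E j ^ 2) :
    ∀ j, 1 ≤ j → j ≤ k → E k * E (j-1) ≤ E (k-1) * E j := by
  suffices h : ∀ t, ∀ j, 1 ≤ j → j ≤ k → k - j ≤ t → E k * E (j-1) ≤ E (k-1) * E j by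
    intro j h1 h2
    exact h (k-j) j h1 h2 le_rfl
  intro t
  induction t with
  | zero =>
    intro j h1 h2 h3
    have hjk : j = k := by omega
    subst hjk
    exact le_of_eq (mul_comm _ _)
  | succ t ih =>
    intro j h1 h2 h3
    by_cases hjk : j = k
    · subst hjk
      exact le_of_eq (mul_comm _ _)
    · have hih := ih (j+1) (by omega) (by omega) (by omega)
      rw [Nat.add_sub_cancel] at hih
      have hnew := hnewton j h1 (by omega)
      have hc : 0 < E j * E (j+1) := mul_pos (hpos j (by omega)) (hpos (j+1) (by omega))
      have h9 : (E j * E (j+1)) * (E k * E (j-1)) ≤ (E j * E (j+1)) * (E (k-1) * E j) := by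
        calc (E j * E (j+1)) * (E k * E (j-1)) = (E k * E j) * (E (j-1) * E (j+1)) := by ring
        _ ≤ (E (k-1) * E (j+1)) * (E j ^ 2) := by
            apply mul_le_mul hih hnew
            · exact le_of_lt (mul_pos (hpos (j-1) (by omega)) (hpos (j+1) (by omega)))
            · exact le_of_lt (mul_pos (hpos (k-1) (by omega)) (hpos (j+1) (by omega)))
        _ = (E j * E (j+1)) * (E (k-1) * E j) := by ring
      exact le_of_mul_le_mul_left h9 hc

lemma chain_pow (E : ℕ → ℝ) (k : ℕ) (hk : 1 ≤ k)
    (hpos : ∀ j, j ≤ k → 0 < E j)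
    (hnewton : ∀ j, 1 ≤ j → j + 1 ≤ k → E (j-1) * E (j+1) ≤ E j ^ 2) :
    ∀ i, i ≤ k - 1 → E k ^ i * E (k-1-i) ≤ E (k-1) ^ (i+1) := by
  intro i
  induction i with
  | zero =>
    intro _
    simp
  | succ i ih =>
    intro hi
    have hih := ih (by omega)
    have hratio := chain_ratio E k hk hpos hnewton (k-1-i) (by omega) (by omega)
    have e1 : k - 1 - i - 1 = k - 1 - (i+1) := by omega
    rw [e1] at hratio
    calc E k ^ (i+1) * E (k-1-(i+1)) = E k ^ i * (E k * E (k-1-(i+1))) := by ring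
    _ ≤ E k ^ i * (E (k-1) * E (k-1-i)) := by
        apply mul_le_mul_of_nonneg_left hratio (pow_nonneg (le_of_lt (hpos k le_rfl)) i)
    _ = E (k-1) * (E k ^ i * E (k-1-i)) := by ring
    _ ≤ E (k-1) * E (k-1) ^ (i+1) := by
        apply mul_le_mul_of_nonneg_left hih (le_of_lt (hpos (k-1) (by omega)))
    _ = E (k-1) ^ (i+2) := by ring

/-- Strict ellipticity of the Hessian-quotient-type operator. -/
theorem stmt_11 (n k l : ℕ) (hl1 : 1 ≤ l) (hlk : l < k) (hkn : k ≤ n - 1) :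
    ∃ c : ℝ, 0 < c ∧
      ∀ lam η : Fin n → ℝ,
        (∀ i : Fin n, η i = (∑ j : Fin n, lam j) - lam i) →
        η ∈ GardingCone n (k + 1) →
        c ≤ ∑ i : Fin n,
            (1 / ((k : ℝ) - (l : ℝ))) *
              (esym n k η / esym n l η) ^ ((1 : ℝ) / ((k : ℝ) - (l : ℝ)) - 1) *
              ∑ p ∈ Finset.univ.erase i,
                (esymDel n (k - 1) η p * esym n l η - esym n k η * esymDel n (l - 1) η p) /
                  (esym n l η) ^ 2 := by
  have hkn' : k + 1 ≤ n := by omega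
  have hn3 : 3 ≤ n := by omega
  set γ : ℝ := (k:ℝ) - (l:ℝ) with hγ
  have hγpos : 0 < γ := by
    rw [hγ]
    have : (l:ℝ) < (k:ℝ) := by exact_mod_cast hlk
    linarith
  have hγne : γ ≠ 0 := ne_of_gt hγpos
  set m : ℕ := k - l with hmdef
  have hm1 : 1 ≤ m := by omega
  have hγm : ((m:ℕ):ℝ) = γ := by rw [hγ, hmdef, Nat.cast_sub hlk.le]
  have hCpos : ∀ j, j ≤ n → (0:ℝ) < (n.choose j : ℝ) := fun j hj => by
    exact_mod_cast Nat.choose_pos hj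
  set β : ℝ := (n.choose k : ℝ) / (n.choose l : ℝ) with hβ
  have hβpos : 0 < β := div_pos (hCpos k (by omega)) (hCpos l (by omega))
  have hn1 : (1:ℝ) < (n:ℝ) := by exact_mod_cast (by omega : 1 < n)
  refine ⟨((n:ℝ) - 1) * β ^ ((1:ℝ)/γ), ?_, ?_⟩
  · have h2 := Real.rpow_pos_of_pos hβpos ((1:ℝ)/γ)
    nlinarith
  intro lam η _ hconeG
  have hcone : ∀ i : ℕ, 1 ≤ i → i ≤ k + 1 → 0 < esym n i η := hconeG
  set T : ℝ := (esym n k η / esym n l η) ^ ((1:ℝ)/γ - 1) with hT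
  set E : ℕ → ℝ := fun j => esym n j η / (n.choose j : ℝ) with hEdef
  have hEpos : ∀ j, j ≤ k+1 → 0 < E j := by
    intro j hj
    rcases Nat.eq_zero_or_pos j with rfl | hj1
    · rw [hEdef]; simp [esym_zero]
    · exact div_pos (hcone j hj1 hj) (hCpos j (by omega))
  have hSE : ∀ j, j ≤ n → esym n j η = (n.choose j : ℝ) * E j := by
    intro j hj
    rw [hEdef]
    simp only
    rw [mul_comm, div_mul_cancel₀ _ (ne_of_gt (hCpos j hj))]
  have hSlpos : 0 < esym n l η := hcone l hl1 (by omega)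
  have hSkpos : 0 < esym n k η := hcone k (by omega) (by omega)
  have hElne : E l ≠ 0 := ne_of_gt (hEpos l (by omega))
  have hnewtE : ∀ j, 1 ≤ j → j + 1 ≤ k + 1 → E (j-1) * E (j+1) ≤ E j ^ 2 := by
    intro j h1 h2
    have := newton_E n j h1 (by omega) η
    rw [hEdef]
    exact this
  have hratio := chain_ratio E k (by omega) (fun j hj => hEpos j (by omega))
    (fun j a b => hnewtE j a (by omega)) l hl1 hlk.le
  have hpow := chain_pow E k (by omega) (fun j hj => hEpos j (by omega))
    (fun j a b => hnewtE j a (by omega)) (m-1) (by omega)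
  rw [show k - 1 - (m-1) = l by omega, show m - 1 + 1 = m by omega] at hpow
  -- hpow : E k ^ (m-1) * E l ≤ E (k-1) ^ m
  -- rewrite the sum
  have hgoalsum : (∑ i : Fin n, (1/γ) * T * ∑ p ∈ Finset.univ.erase i,
      (esymDel n (k-1) η p * esym n l η - esym n k η * esymDel n (l-1) η p) / (esym n l η)^2)
      = (1/γ) * T * (((n:ℝ) - 1) *
        (((((n:ℝ) - ((k-1:ℕ):ℝ)) * esym n (k-1) η) * esym n l η
          - esym n k η * (((n:ℝ) - ((l-1:ℕ):ℝ)) * esym n (l-1) η)) / (esym n l η)^2)) := by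
    rw [← Finset.mul_sum]
    congr 1
    rw [Finset.sum_comm' (t' := Finset.univ) (s' := fun p => Finset.univ.erase p)
      (by intro a b; simp only [Finset.mem_univ, Finset.mem_erase, true_and, and_true]; exact ⟨fun h => h.symm, fun h => h.symm⟩)]
    have hinner : ∀ p : Fin n, (∑ _i ∈ Finset.univ.erase p,
        (esymDel n (k-1) η p * esym n l η - esym n k η * esymDel n (l-1) η p) / (esym n l η)^2)
        = ((n:ℝ) - 1) *
          ((esymDel n (k-1) η p * esym n l η - esym n k η * esymDel n (l-1) η p) / (esym n l η)^2) := by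
      intro p
      rw [Finset.sum_const, Finset.card_erase_of_mem (Finset.mem_univ p), Finset.card_univ,
        Fintype.card_fin, nsmul_eq_mul, Nat.cast_sub (by omega : 1 ≤ n), Nat.cast_one]
    rw [Finset.sum_congr rfl (fun p _ => hinner p), ← Finset.mul_sum]
    congr 1
    rw [← Finset.sum_div]
    congr 1
    rw [Finset.sum_sub_distrib, ← Finset.sum_mul, ← Finset.mul_sum,
      sum_esymDel n (k-1) (by omega) η, sum_esymDel n (l-1) (by omega) η]
  rw [hgoalsum]
  -- choose identities
  have hkey1 : ((n:ℝ) - ((k-1:ℕ):ℝ)) * (n.choose (k-1) : ℝ) = (k:ℝ) * (n.choose k : ℝ) := by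
    have h0 := Nat.choose_succ_right_eq n (k-1)
    rw [show k - 1 + 1 = k by omega] at h0
    have h0' : ((n.choose k : ℕ):ℝ) * (k:ℝ) = ((n.choose (k-1) : ℕ) : ℝ) * ((n - (k-1) : ℕ) : ℝ) := by
      exact_mod_cast congrArg (Nat.cast : ℕ → ℝ) h0
    rw [Nat.cast_sub (by omega : k - 1 ≤ n)] at h0'
    linarith
  have hkey2 : ((n:ℝ) - ((l-1:ℕ):ℝ)) * (n.choose (l-1) : ℝ) = (l:ℝ) * (n.choose l : ℝ) := by
    have h0 := Nat.choose_succ_right_eq n (l-1)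
    rw [show l - 1 + 1 = l by omega] at h0
    have h0' : ((n.choose l : ℕ):ℝ) * (l:ℝ) = ((n.choose (l-1) : ℕ) : ℝ) * ((n - (l-1) : ℕ) : ℝ) := by
      exact_mod_cast congrArg (Nat.cast : ℕ → ℝ) h0
    rw [Nat.cast_sub (by omega : l - 1 ≤ n)] at h0'
    linarith
  have hbr : γ * ((n.choose k : ℝ) * (n.choose l : ℝ)) * (E (k-1) * E l)
      ≤ (((n:ℝ) - ((k-1:ℕ):ℝ)) * esym n (k-1) η) * esym n l η
        - esym n k η * (((n:ℝ) - ((l-1:ℕ):ℝ)) * esym n (l-1) η) := by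
    rw [hSE (k-1) (by omega), hSE l (by omega), hSE k (by omega), hSE (l-1) (by omega)]
    have expand : (((n:ℝ) - ((k-1:ℕ):ℝ)) * ((n.choose (k-1):ℝ) * E (k-1))) * ((n.choose l:ℝ) * E l)
        - ((n.choose k:ℝ) * E k) * (((n:ℝ) - ((l-1:ℕ):ℝ)) * ((n.choose (l-1):ℝ) * E (l-1)))
        = (n.choose k:ℝ) * (n.choose l:ℝ) *
          ((k:ℝ) * (E (k-1) * E l) - (l:ℝ) * (E k * E (l-1))) := by
      calc (((n:ℝ) - ((k-1:ℕ):ℝ)) * ((n.choose (k-1):ℝ) * E (k-1))) * ((n.choose l:ℝ) * E l)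
          - ((n.choose k:ℝ) * E k) * (((n:ℝ) - ((l-1:ℕ):ℝ)) * ((n.choose (l-1):ℝ) * E (l-1)))
          = (((n:ℝ) - ((k-1:ℕ):ℝ)) * (n.choose (k-1):ℝ)) * ((n.choose l:ℝ) * (E (k-1) * E l))
            - (((n:ℝ) - ((l-1:ℕ):ℝ)) * (n.choose (l-1):ℝ)) * ((n.choose k:ℝ) * (E k * E (l-1))) := by
            ring
        _ = ((k:ℝ) * (n.choose k : ℝ)) * ((n.choose l:ℝ) * (E (k-1) * E l))
            - ((l:ℝ) * (n.choose l : ℝ)) * ((n.choose k:ℝ) * (E k * E (l-1))) := by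
            rw [hkey1, hkey2]
        _ = (n.choose k:ℝ) * (n.choose l:ℝ) *
            ((k:ℝ) * (E (k-1) * E l) - (l:ℝ) * (E k * E (l-1))) := by ring
    rw [expand]
    have hCC : (0:ℝ) ≤ (n.choose k:ℝ) * (n.choose l:ℝ) * (l:ℝ) := by positivity
    have h5 := mul_le_mul_of_nonneg_left hratio hCC
    rw [hγ]
    ring_nf
    ring_nf at h5
    linarith [h5]
  -- the main equality for the lower-bound expression
  have hfrac_eq : (1/γ) * T * (((n:ℝ)-1) *
      ((γ * ((n.choose k:ℝ) * (n.choose l:ℝ)) * (E (k-1) * E l)) / (esym n l η)^2))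
      = ((n:ℝ)-1) * (T * (β * (E (k-1) / E l))) := by
    rw [hSE l (by omega), hβ]
    have hClne : (n.choose l : ℝ) ≠ 0 := ne_of_gt (hCpos l (by omega))
    field_simp
  have hTpos : 0 < T := Real.rpow_pos_of_pos (div_pos hSkpos hSlpos) _
  have hmono : ((n:ℝ)-1) * (T * (β * (E (k-1) / E l)))
      ≤ (1/γ) * T * (((n:ℝ) - 1) *
        (((((n:ℝ) - ((k-1:ℕ):ℝ)) * esym n (k-1) η) * esym n l η
          - esym n k η * (((n:ℝ) - ((l-1:ℕ):ℝ)) * esym n (l-1) η)) / (esym n l η)^2)) := by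
    rw [← hfrac_eq]
    have h1γ : (0:ℝ) ≤ 1/γ := by positivity
    have hn1' : (0:ℝ) ≤ (n:ℝ) - 1 := by linarith
    have hT0 : (0:ℝ) ≤ T := le_of_lt hTpos
    gcongr
  -- rpow identities
  have hupos : 0 < E k / E l := div_pos (hEpos k (by omega)) (hEpos l (by omega))
  have hTval : esym n k η / esym n l η = β * (E k / E l) := by
    rw [hSE k (by omega), hSE l (by omega), hβ]
    have hClne : (n.choose l : ℝ) ≠ 0 := ne_of_gt (hCpos l (by omega))
    have hCkne : (n.choose k : ℝ) ≠ 0 := ne_of_gt (hCpos k (by omega))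
    field_simp
  have hid : T * (β * ((E k / E l) ^ ((1:ℝ) - 1/γ))) = β ^ ((1:ℝ)/γ) := by
    rw [hT, hTval, Real.mul_rpow hβpos.le hupos.le]
    calc (β ^ ((1:ℝ)/γ - 1) * (E k / E l) ^ ((1:ℝ)/γ - 1))
          * (β * (E k / E l) ^ ((1:ℝ) - 1/γ))
        = (β ^ ((1:ℝ)/γ - 1) * β ^ (1:ℝ))
          * ((E k / E l) ^ ((1:ℝ)/γ - 1) * (E k / E l) ^ ((1:ℝ) - 1/γ)) := by
          rw [Real.rpow_one]
          ring
      _ = β ^ ((1:ℝ)/γ - 1 + 1) * (E k / E l) ^ ((1:ℝ)/γ - 1 + ((1:ℝ) - 1/γ)) := by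
          rw [← Real.rpow_add hβpos, ← Real.rpow_add hupos]
      _ = β ^ ((1:ℝ)/γ) * (E k / E l) ^ (0:ℝ) := by
          norm_num
      _ = β ^ ((1:ℝ)/γ) := by
          rw [Real.rpow_zero, mul_one]
  have hδstep : (E k / E l) ^ ((1:ℝ) - 1/γ) ≤ E (k-1) / E l := by
    rw [le_div_iff₀ (hEpos l (by omega))]
    apply le_of_pow_le_pow_left₀ (n := m) (by omega) (le_of_lt (hEpos (k-1) (by omega)))
    have hcalc : ((E k / E l) ^ ((1:ℝ) - 1/γ) * E l) ^ m = E k ^ (m-1) * E l := by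
      rw [mul_pow, ← Real.rpow_natCast ((E k / E l) ^ ((1:ℝ) - 1/γ)) m,
        ← Real.rpow_mul hupos.le]
      have hexp : ((1:ℝ) - 1/γ) * ((m:ℕ):ℝ) = ((m-1:ℕ):ℝ) := by
        rw [Nat.cast_sub hm1, hγm]
        field_simp
        norm_num
      rw [hexp, Real.rpow_natCast, div_pow]
      rw [show m = (m-1)+1 by omega, pow_succ]
      have hElne' : E l ^ (m-1) ≠ 0 := pow_ne_zero _ hElne
      field_simp
      rw [Nat.add_sub_cancel]
    rw [hcalc]
    have hEk1pow : E (k-1) ^ m ≥ E k ^ (m-1) * E l := hpow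
    calc E k ^ (m-1) * E l ≤ E (k-1) ^ m := hpow
      _ = E (k-1) ^ m := rfl
  -- final chain
  calc ((n:ℝ) - 1) * β ^ ((1:ℝ)/γ)
      = ((n:ℝ) - 1) * (T * (β * ((E k / E l) ^ ((1:ℝ) - 1/γ)))) := by rw [hid]
    _ ≤ ((n:ℝ) - 1) * (T * (β * (E (k-1) / E l))) := by
        have hn1' : (0:ℝ) ≤ (n:ℝ) - 1 := by linarith
        have hT0 : (0:ℝ) ≤ T := le_of_lt hTpos
        gcongr
    _ ≤ _ := hmono
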